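/- (Symmetric sum formula, star version; Hoffman, Murahara) For any positive integers k1,…,kr, for all but finitely many primes p one has Σ_{σ ∈ 𝔖_r} Z*_p(k_{σ(1)},…,k_{σ(r)}) = 0 in ℤ/pℤ, where 𝔖_r is the symmetric group on r letters. Equivalently, Σ_{σ ∈ 𝔖_r} ζ*_𝒜(k_{σ(1)},…,k_{σ(r)}) = 0. -/

import Mathlib

set_option maxHeartbeats 1000000


/-- Truncated multiple harmonic sum
`Z_p(k₁,…,k_r) = ∑_{0 < n₁ < ⋯ < n_r < p} 1/(n₁^{k₁} ⋯ n_r^{k_r})` in `ZMod p`,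
with the index given as a tuple `k : Fin r → ℕ`.  (For `r = 0` the value is `1`.) -/
def Zfin (p : ℕ) {r : ℕ} (k : Fin r → ℕ) : ZMod p :=
  ∑ n ∈ Finset.univ.filter
      (fun n : Fin r → Fin p =>
        (∀ j1 j2 : Fin r, j1 < j2 → n j1 < n j2) ∧ ∀ j : Fin r, 0 < (n j : ℕ)),
    ∏ j : Fin r, (((n j : ℕ) : ZMod p))⁻¹ ^ k j

/-- Truncated multiple harmonic star sum
`Z*_p(k₁,…,k_r) = ∑_{0 < n₁ ≤ ⋯ ≤ n_r < p} 1/(n₁^{k₁} ⋯ n_r^{k_r})` in `ZMod p`. -/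
def ZSfin (p : ℕ) {r : ℕ} (k : Fin r → ℕ) : ZMod p :=
  ∑ n ∈ Finset.univ.filter
      (fun n : Fin r → Fin p =>
        (∀ j1 j2 : Fin r, j1 < j2 → n j1 ≤ n j2) ∧ ∀ j : Fin r, 0 < (n j : ℕ)),
    ∏ j : Fin r, (((n j : ℕ) : ZMod p))⁻¹ ^ k j

/-- `Z_p` on an index given as a list. -/
def ZL (p : ℕ) (k : List ℕ) : ZMod p := Zfin p k.get

/-- `Z*_p` on an index given as a list. -/
def ZSL (p : ℕ) (k : List ℕ) : ZMod p := ZSfin p k.get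

/-- **Symmetric sum formula, star version** (Hoffman, Murahara): for positive integers
`k₁,…,k_r`, for all but finitely many primes `p`,
`∑_{σ ∈ 𝔖_r} Z*_p(k_{σ(1)},…,k_{σ(r)}) = 0` in `ℤ/pℤ`; equivalently
`∑_{σ ∈ 𝔖_r} ζ*_𝒜(k_{σ(1)},…,k_{σ(r)}) = 0`. -/

theorem perm_apply_inv_self' {α : Type*} (f : Equiv.Perm α) (x : α) : f (f⁻¹ x) = x :=
  Equiv.apply_symm_apply f x

theorem perm_inv_apply_self' {α : Type*} (f : Equiv.Perm α) (x : α) : f⁻¹ (f x) = x :=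
  Equiv.symm_apply_apply f x

lemma powsum_zero (p : ℕ) (hp : p.Prime) (K : ℕ) (hK : 0 < K) (hKp : K < p - 1) :
    ∑ v ∈ Finset.univ.filter (fun v : Fin p => 0 < (v : ℕ)),
      (((v : ℕ) : ZMod p))⁻¹ ^ K = 0 := by
  haveI : Fact p.Prime := ⟨hp⟩
  have h0 : ∑ v ∈ Finset.univ.filter (fun v : Fin p => 0 < (v : ℕ)),
      (((v : ℕ) : ZMod p))⁻¹ ^ K = ∑ v : Fin p, (((v : ℕ) : ZMod p))⁻¹ ^ K := by
    apply Finset.sum_filter_of_ne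
    intro v _ hv
    by_contra hc
    apply hv
    have : (v : ℕ) = 0 := by omega
    rw [this]
    simp [zero_pow hK.ne']
  have hbij : Function.Bijective (fun v : Fin p => ((v : ℕ) : ZMod p)) := by
    rw [Fintype.bijective_iff_injective_and_card]
    constructor
    · intro a b hab
      have ha := ZMod.val_cast_of_lt a.2
      have hb := ZMod.val_cast_of_lt b.2
      have : ((a : ℕ) : ZMod p).val = ((b : ℕ) : ZMod p).val := by simp only at hab; rw [hab]
      rw [ha, hb] at this
      exact Fin.ext this
    · simp [ZMod.card]
  have h1 : ∑ v : Fin p, (((v : ℕ) : ZMod p))⁻¹ ^ K = ∑ x : ZMod p, x⁻¹ ^ K :=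
    Fintype.sum_bijective _ hbij _ _ (fun v => rfl)
  have h2 : ∑ x : ZMod p, x⁻¹ ^ K = ∑ x : ZMod p, x ^ K :=
    Fintype.sum_bijective (fun x : ZMod p => x⁻¹) (Function.Involutive.bijective inv_involutive)
      _ _ (fun x => rfl)
  rw [h0, h1, h2]
  have := FiniteField.sum_pow_lt_card_sub_one (K := ZMod p) K (by rwa [ZMod.card])
  exact this

lemma invariant_sum_eq_zero (p r : ℕ) (hp : p.Prime) (hr : 0 < r) (k : Fin r → ℕ)
    (hpos : ∀ j, 0 < k j) (hW : (∑ j, k j) < p - 1) (τ : Equiv.Perm (Fin r)) :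
    ∑ m ∈ Finset.univ.filter
        (fun m : Fin r → Fin p => m ∘ ⇑τ = m ∧ ∀ i : Fin r, 0 < ((m i : ℕ))),
      ∏ i : Fin r, (((m i : ℕ) : ZMod p))⁻¹ ^ k i = 0 := by
  classical
  have hinv : ∀ m : Fin r → Fin p, m ∘ ⇑τ = m → ∀ z : ℤ, ∀ i, m ((τ ^ z) i) = m i := by
    intro m hm
    have hnat : ∀ n : ℕ, ∀ i, m ((τ ^ n) i) = m i := by
      intro n
      induction n with
      | zero => simp
      | succ n ih =>
        intro i
        rw [pow_succ, Equiv.Perm.mul_apply, ih (τ i)]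
        exact congrFun hm i
    intro z i
    cases z with
    | ofNat n => exact hnat n i
    | negSucc n =>
      rw [zpow_negSucc]
      have := hnat (n + 1) (((τ ^ (n + 1))⁻¹) i)
      rw [perm_apply_inv_self'] at this
      exact this.symm
  let s : Setoid (Fin r) :=
    ⟨fun i j => ∃ z : ℤ, (τ ^ z) i = j, by
      constructor
      · intro i; exact ⟨0, by simp⟩
      · rintro i j ⟨z, rfl⟩
        exact ⟨-z, by simp [zpow_neg]⟩
      · rintro i j l ⟨z1, rfl⟩ ⟨z2, rfl⟩
        exact ⟨z2 + z1, by rw [zpow_add, Equiv.Perm.mul_apply]⟩⟩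
  let φ : Fin r → Quotient s := Quotient.mk s
  have hφτ : ∀ i, φ (τ i) = φ i := by
    intro i
    exact (Quotient.sound (show s.r i (τ i) from ⟨1, by simp⟩)).symm
  have hφout : ∀ m : Fin r → Fin p, m ∘ ⇑τ = m → ∀ i, m (φ i).out = m i := by
    intro m hm i
    obtain ⟨z, hz⟩ : ∃ z : ℤ, (τ ^ z) (φ i).out = i := Quotient.mk_out i
    conv_rhs => rw [← hz]
    exact (hinv m hm z _).symm
  let Kq : Quotient s → ℕ := fun q => ∑ i ∈ Finset.univ.filter (fun i => φ i = q), k i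
  have key : ∀ q : Quotient s,
      ∑ v ∈ Finset.univ.filter (fun v : Fin p => 0 < (v : ℕ)),
        (((v : ℕ) : ZMod p))⁻¹ ^ Kq q = 0 := by
    intro q
    apply powsum_zero p hp
    · have : q.out ∈ Finset.univ.filter (fun i => φ i = q) := by
        simp [φ, Quotient.out_eq]
      calc 0 < k q.out := hpos _
        _ ≤ Kq q := Finset.single_le_sum (fun i _ => Nat.zero_le _) this
    · calc Kq q ≤ ∑ j, k j := Finset.sum_le_sum_of_subset (Finset.filter_subset _ _)
        _ < p - 1 := hW
  calc ∑ m ∈ Finset.univ.filter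
        (fun m : Fin r → Fin p => m ∘ ⇑τ = m ∧ ∀ i : Fin r, 0 < ((m i : ℕ))),
      ∏ i : Fin r, (((m i : ℕ) : ZMod p))⁻¹ ^ k i
      = ∑ g ∈ Fintype.piFinset (fun _ : Quotient s =>
            Finset.univ.filter (fun v : Fin p => 0 < (v : ℕ))),
          ∏ i : Fin r, (((g (φ i) : ℕ) : ZMod p))⁻¹ ^ k i := by
        apply Finset.sum_nbij' (i := fun m => fun q => m q.out)
          (j := fun g => fun i => g (φ i))
        · intro m hm
          rw [Finset.mem_filter] at hm
          rw [Fintype.mem_piFinset]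
          intro q
          simp only [Finset.mem_filter, Finset.mem_univ, true_and]
          exact hm.2.2 _
        · intro g hg
          rw [Fintype.mem_piFinset] at hg
          rw [Finset.mem_filter]
          refine ⟨Finset.mem_univ _, ?_, ?_⟩
          · funext i
            simp only [Function.comp_apply, hφτ]
          · intro i
            have := hg (φ i)
            simpa using this
        · intro m hm
          rw [Finset.mem_filter] at hm
          funext i
          exact hφout m hm.2.1 i
        · intro g hg
          funext q
          simp only [φ, Quotient.out_eq]
        · intro m hm
          rw [Finset.mem_filter] at hm
          apply Finset.prod_congr rfl
          intro i _
          simp only [hφout m hm.2.1 i]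
    _ = ∑ g ∈ Fintype.piFinset (fun _ : Quotient s =>
            Finset.univ.filter (fun v : Fin p => 0 < (v : ℕ))),
          ∏ q : Quotient s, (((g q : ℕ) : ZMod p))⁻¹ ^ Kq q := by
        apply Finset.sum_congr rfl
        intro g _
        rw [← Finset.prod_fiberwise Finset.univ φ
          (fun i => (((g (φ i) : ℕ) : ZMod p))⁻¹ ^ k i)]
        apply Finset.prod_congr rfl
        intro q _
        rw [show ∏ i ∈ Finset.univ.filter (fun i => φ i = q),
              (((g (φ i) : ℕ) : ZMod p))⁻¹ ^ k i
            = ∏ i ∈ Finset.univ.filter (fun i => φ i = q),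
              (((g q : ℕ) : ZMod p))⁻¹ ^ k i from
          Finset.prod_congr rfl (fun i hi => by rw [(Finset.mem_filter.1 hi).2])]
        exact Finset.prod_pow_eq_pow_sum _ _ _
    _ = ∏ q : Quotient s, ∑ v ∈ Finset.univ.filter (fun v : Fin p => 0 < (v : ℕ)),
          (((v : ℕ) : ZMod p))⁻¹ ^ Kq q :=
        (Finset.prod_univ_sum (fun _ : Quotient s =>
            Finset.univ.filter (fun v : Fin p => 0 < (v : ℕ)))
          (fun q v => (((v : ℕ) : ZMod p))⁻¹ ^ Kq q)).symm
    _ = 0 := Finset.prod_eq_zero (Finset.mem_univ (φ ⟨0, hr⟩)) (key _)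

theorem symmetric_sum_fmzsv (r : ℕ) (hr : 0 < r) (ks : Fin r → ℕ) (hpos : ∀ j, 0 < ks j) :
    ∃ N : ℕ, ∀ p : ℕ, p.Prime → N < p →
      ∑ σ : Equiv.Perm (Fin r), ZSfin p (fun j => ks (σ j)) = 0 := by
  classical
  refine ⟨(∑ j, ks j) + 1, fun p hp hNp => ?_⟩
  have hW : (∑ j, ks j) < p - 1 := by omega
  have hterm : ∀ σ : Equiv.Perm (Fin r), ∀ n : Fin r → Fin p,
      (∏ j, (((n j : ℕ) : ZMod p))⁻¹ ^ ks (σ j))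
      = ∏ i, ((((n ∘ ⇑σ⁻¹) i : ℕ) : ZMod p))⁻¹ ^ ks i := by
    intro σ n
    rw [← Equiv.prod_comp σ (fun i => ((((n ∘ ⇑σ⁻¹) i : ℕ) : ZMod p))⁻¹ ^ ks i)]
    apply Finset.prod_congr rfl
    intro j _
    simp
  have h1 : ∑ σ : Equiv.Perm (Fin r), ZSfin p (fun j => ks (σ j))
      = ∑ x ∈ (Finset.univ.filter (fun x : Equiv.Perm (Fin r) × (Fin r → Fin p) =>
          (∀ j1 j2 : Fin r, j1 < j2 → x.2 j1 ≤ x.2 j2) ∧ ∀ j : Fin r, 0 < ((x.2 j : ℕ)))),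
        ∏ i, ((((x.2 ∘ ⇑x.1⁻¹) i : ℕ) : ZMod p))⁻¹ ^ ks i := by
    rw [Finset.sum_filter, Fintype.sum_prod_type]
    apply Finset.sum_congr rfl
    intro σ _
    rw [ZSfin, Finset.sum_filter]
    apply Finset.sum_congr rfl
    intro n _
    by_cases hc : (∀ j1 j2 : Fin r, j1 < j2 → n j1 ≤ n j2) ∧ ∀ j : Fin r, 0 < ((n j : ℕ))
    · rw [if_pos hc, if_pos hc, hterm σ n]
    · rw [if_neg hc, if_neg hc]
  have h2 : ∑ x ∈ (Finset.univ.filter (fun x : Equiv.Perm (Fin r) × (Fin r → Fin p) =>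
          (∀ j1 j2 : Fin r, j1 < j2 → x.2 j1 ≤ x.2 j2) ∧ ∀ j : Fin r, 0 < ((x.2 j : ℕ)))),
        ∏ i, ((((x.2 ∘ ⇑x.1⁻¹) i : ℕ) : ZMod p))⁻¹ ^ ks i
      = ∑ y ∈ (Finset.univ.filter (fun y : Equiv.Perm (Fin r) × (Fin r → Fin p) =>
          y.2 ∘ ⇑y.1 = y.2 ∧ ∀ i : Fin r, 0 < ((y.2 i : ℕ)))),
        ∏ i, (((y.2 i : ℕ) : ZMod p))⁻¹ ^ ks i := by
    apply Finset.sum_nbij'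
      (i := fun x : Equiv.Perm (Fin r) × (Fin r → Fin p) =>
        (x.1 * (Tuple.sort (x.2 ∘ ⇑x.1⁻¹))⁻¹, x.2 ∘ ⇑x.1⁻¹))
      (j := fun y : Equiv.Perm (Fin r) × (Fin r → Fin p) =>
        (y.1 * Tuple.sort y.2, y.2 ∘ ⇑(Tuple.sort y.2)))
    · -- hi
      rintro ⟨σ, n⟩ hx
      rw [Finset.mem_filter] at hx
      obtain ⟨-, hmono, hpos'⟩ := hx
      have hnm : Monotone n := monotone_iff_forall_lt.mpr hmono
      have hcomp : (n ∘ ⇑σ⁻¹) ∘ ⇑σ = n := by funext i; simp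
      have hsort : (n ∘ ⇑σ⁻¹) ∘ ⇑(Tuple.sort (n ∘ ⇑σ⁻¹)) = n := by
        rw [← Tuple.comp_sort_eq_comp_iff_monotone.mpr (by rw [hcomp]; exact hnm), hcomp]
      rw [Finset.mem_filter]
      refine ⟨Finset.mem_univ _, ?_, fun i => by simpa using hpos' _⟩
      funext i
      have h1 := congrFun hsort ((Tuple.sort (n ∘ ⇑σ⁻¹))⁻¹ i)
      simp only [Function.comp_apply, perm_apply_inv_self', Equiv.Perm.mul_apply,
        perm_inv_apply_self'] at h1 ⊢
      exact h1.symm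
    · -- hj
      rintro ⟨τ, m⟩ hy
      rw [Finset.mem_filter] at hy
      obtain ⟨-, hinv, hpos'⟩ := hy
      rw [Finset.mem_filter]
      exact ⟨Finset.mem_univ _,
        fun j1 j2 hlt => (Tuple.monotone_sort m) hlt.le,
        fun i => by simpa using hpos' _⟩
    · -- left inverse
      rintro ⟨σ, n⟩ hx
      rw [Finset.mem_filter] at hx
      obtain ⟨-, hmono, hpos'⟩ := hx
      have hnm : Monotone n := monotone_iff_forall_lt.mpr hmono
      have hcomp : (n ∘ ⇑σ⁻¹) ∘ ⇑σ = n := by funext i; simp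
      have hsort : (n ∘ ⇑σ⁻¹) ∘ ⇑(Tuple.sort (n ∘ ⇑σ⁻¹)) = n := by
        rw [← Tuple.comp_sort_eq_comp_iff_monotone.mpr (by rw [hcomp]; exact hnm), hcomp]
      refine Prod.ext ?_ ?_
      · simp [inv_mul_cancel_right]
      · simpa using hsort
    · -- right inverse
      rintro ⟨τ, m⟩ hy
      rw [Finset.mem_filter] at hy
      obtain ⟨-, hinvar, hpos'⟩ := hy
      have hA : (m ∘ ⇑(Tuple.sort m)) ∘ ⇑(τ * Tuple.sort m)⁻¹ = m := by
        funext i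
        have := congrFun hinvar (τ⁻¹ i)
        simp only [Function.comp_apply, perm_apply_inv_self'] at this
        simp only [Function.comp_apply, mul_inv_rev, Equiv.Perm.mul_apply,
          perm_apply_inv_self']
        exact this.symm
      refine Prod.ext ?_ ?_
      · simp only []
        rw [show ((τ * Tuple.sort m, m ∘ ⇑(Tuple.sort m)).2
            ∘ ⇑(τ * Tuple.sort m, m ∘ ⇑(Tuple.sort m)).1⁻¹) = m from hA]
        simp [mul_inv_cancel_right]
      · simp only []
        rw [show ((τ * Tuple.sort m, m ∘ ⇑(Tuple.sort m)).2
            ∘ ⇑(τ * Tuple.sort m, m ∘ ⇑(Tuple.sort m)).1⁻¹) = m from hA]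
    · -- values
      rintro ⟨σ, n⟩ _
      rfl
  rw [h1, h2, Finset.sum_filter, Fintype.sum_prod_type]
  apply Finset.sum_eq_zero
  intro τ _
  rw [← Finset.sum_filter]
  exact invariant_sum_eq_zero p r hp hr ks hpos hW τ
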